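/- Commutator of a second-order operator with a Minkowski vector field (Lemma 7.5, first part): for every smooth symmetric tensor field k = (k^{αβ}) on ℝ^{1+3}, every Z ∈ 𝒵 and every smooth function φ, k^{αβ}[∂_α∂_β, Z]φ = k_Z^{αβ} ∂_α∂_β φ, where k_Z^{αβ} = k^{αγ} c_γ^β + k^{γβ} c_γ^α and c_α^μ = ∂_α Z^μ are the commutator constants [∂_α,Z] = c_α^μ∂_μ. In particular k_S^{αβ} = 2 k^{αβ}, and at every point with x ≠ 0 one has |k_Z|_{LL} ≤ 2 |k|_{L𝒯}. -/

import Mathlib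

open scoped BigOperators ENNReal
open MeasureTheory

noncomputable section

namespace LindbladRodnianski

/-- Minkowski metric `diag(-1,1,1,1)` (numerically the same with indices up or down). -/
def mink (α β : Fin 4) : ℝ := if α = β then (if α = 0 then -1 else 1) else 0

/-- spatial part of a spacetime point -/
def sp (y : Fin 4 → ℝ) : Fin 3 → ℝ := fun i => y i.succ

/-- Euclidean norm on `Fin 3 → ℝ` -/
def nr3 (x : Fin 3 → ℝ) : ℝ := Real.sqrt (∑ i : Fin 3, x i ^ 2)

/-- r = |x| -/
def rad (y : Fin 4 → ℝ) : ℝ := nr3 (sp y)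

/-- the unit spatial direction ω = x/|x| -/
def uom (y : Fin 4 → ℝ) : Fin 3 → ℝ := fun i => sp y i / rad y

/-- q = r - t -/
def qq (y : Fin 4 → ℝ) : ℝ := rad y - y 0

/-- combine a time and a space point into a spacetime point -/
def tins (t : ℝ) (x : Fin 3 → ℝ) : Fin 4 → ℝ := Fin.cons t x

/-- L = (1, ω) (indices up) -/
def vecL (ω : Fin 3 → ℝ) : Fin 4 → ℝ := ![1, ω 0, ω 1, ω 2]
/-- L̄ = (1, -ω) (indices up) -/
def vecLb (ω : Fin 3 → ℝ) : Fin 4 → ℝ := ![1, -ω 0, -ω 1, -ω 2]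
/-- L with index lowered by m -/
def vecLlow (ω : Fin 3 → ℝ) : Fin 4 → ℝ := ![-1, ω 0, ω 1, ω 2]
/-- L̄ with index lowered by m -/
def vecLblow (ω : Fin 3 → ℝ) : Fin 4 → ℝ := ![-1, -ω 0, -ω 1, -ω 2]
/-- a spatial vector viewed as a spacetime vector -/
def spat (s : Fin 3 → ℝ) : Fin 4 → ℝ := ![0, s 0, s 1, s 2]

/-- `ω, s₁, s₂` is an (ordered) orthonormal frame of ℝ³;
equivalently `s₁, s₂` is an orthonormal basis of the plane orthogonal to the unit vector ω. -/
def IsFrame (ω s₁ s₂ : Fin 3 → ℝ) : Prop :=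
  (∑ i : Fin 3, ω i * ω i) = 1 ∧ (∑ i : Fin 3, s₁ i * s₁ i) = 1 ∧
  (∑ i : Fin 3, s₂ i * s₂ i) = 1 ∧ (∑ i : Fin 3, s₁ i * s₂ i) = 0 ∧
  (∑ i : Fin 3, ω i * s₁ i) = 0 ∧ (∑ i : Fin 3, ω i * s₂ i) = 0

/-- contraction of a 2-tensor with two vectors: `p_{αβ} U^α V^β` -/
def con2 (p : Fin 4 → Fin 4 → ℝ) (U V : Fin 4 → ℝ) : ℝ :=
  ∑ α : Fin 4, ∑ β : Fin 4, p α β * U α * V β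

/-- Euclidean norm of a 2-tensor -/
def tnorm (p : Fin 4 → Fin 4 → ℝ) : ℝ :=
  Real.sqrt (∑ α : Fin 4, ∑ β : Fin 4, (p α β) ^ 2)

/-- coordinate derivative ∂_α f -/
def pd (f : (Fin 4 → ℝ) → ℝ) (α : Fin 4) (y : Fin 4 → ℝ) : ℝ :=
  fderiv ℝ f y (Pi.single α 1)

/-- ∂_α ∂_β f -/
def pd2 (f : (Fin 4 → ℝ) → ℝ) (α β : Fin 4) (y : Fin 4 → ℝ) : ℝ :=
  pd (pd f β) α y

/-- |∂f| -/
def dnorm (f : (Fin 4 → ℝ) → ℝ) (y : Fin 4 → ℝ) : ℝ :=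
  Real.sqrt (∑ α : Fin 4, (pd f α y) ^ 2)

/-- ω extended by ω₀ = 0 to a spacetime vector -/
def uom4 (y : Fin 4 → ℝ) : Fin 4 → ℝ := spat (uom y)

/-- radial derivative ∂_r f = ω^j ∂_j f -/
def pdr (f : (Fin 4 → ℝ) → ℝ) (y : Fin 4 → ℝ) : ℝ :=
  ∑ α : Fin 4, uom4 y α * pd f α y

/-- ∂_q = ½(∂_r - ∂_t) -/
def pdq (f : (Fin 4 → ℝ) → ℝ) (y : Fin 4 → ℝ) : ℝ := (pdr f y - pd f 0 y) / 2

/-- ∂_s = ½(∂_t + ∂_r) -/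
def pds (f : (Fin 4 → ℝ) → ℝ) (y : Fin 4 → ℝ) : ℝ := (pd f 0 y + pdr f y) / 2

/-- the tangential derivatives: index 0 is ∂_s, index i.succ is ∂̄_i = ∂_i - ω_i ω^j ∂_j -/
def tpd (f : (Fin 4 → ℝ) → ℝ) (a : Fin 4) (y : Fin 4 → ℝ) : ℝ :=
  if a = 0 then pds f y else pd f a y - uom4 y a * pdr f y

/-- |∂̄f| -/
def tdnorm (f : (Fin 4 → ℝ) → ℝ) (y : Fin 4 → ℝ) : ℝ :=
  Real.sqrt (∑ a : Fin 4, (tpd f a y) ^ 2)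

/-- coordinates with the index lowered: x₀ = -t, x_i = xⁱ -/
def lowerc (y : Fin 4 → ℝ) (α : Fin 4) : ℝ := if α = 0 then -(y 0) else y α

/-- the translation vector field ∂_μ (its coefficients) -/
def dVF (μ : Fin 4) : (Fin 4 → ℝ) → Fin 4 → ℝ := fun _ => Pi.single μ 1

/-- the rotation/boost field Ω_{ab} = x_a ∂_b - x_b ∂_a (its coefficients) -/
def omVF (a b : Fin 4) : (Fin 4 → ℝ) → Fin 4 → ℝ :=
  fun y ν => lowerc y a * (if ν = b then (1:ℝ) else 0) - lowerc y b * (if ν = a then (1:ℝ) else 0)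

/-- the scaling field S = t∂_t + x^i∂_i (its coefficients) -/
def sVF : (Fin 4 → ℝ) → Fin 4 → ℝ := fun y => y

/-- the family 𝒵 of Minkowski vector fields -/
def ZV : Fin 11 → (Fin 4 → ℝ) → Fin 4 → ℝ :=
  ![dVF 0, dVF 1, dVF 2, dVF 3,
    omVF 0 1, omVF 0 2, omVF 0 3, omVF 1 2, omVF 1 3, omVF 2 3, sVF]

/-- apply a vector field (given by its coefficients) to a function -/
def Zap (Zc : (Fin 4 → ℝ) → Fin 4 → ℝ) (f : (Fin 4 → ℝ) → ℝ) (y : Fin 4 → ℝ) : ℝ :=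
  ∑ μ : Fin 4, Zc y μ * pd f μ y

/-- the Minkowski wave operator □ = m^{αβ}∂_α∂_β = -∂_t² + Δ -/
def box (f : (Fin 4 → ℝ) → ℝ) (y : Fin 4 → ℝ) : ℝ :=
  ∑ α : Fin 4, ∑ β : Fin 4, mink α β * pd2 f α β y

/-- the reduced wave operator □̃_g = □ + H^{αβ}∂_α∂_β with g = m + H (indices up) -/
def boxg (H : (Fin 4 → ℝ) → Fin 4 → Fin 4 → ℝ) (f : (Fin 4 → ℝ) → ℝ) (y : Fin 4 → ℝ) : ℝ :=
  box f y + ∑ α : Fin 4, ∑ β : Fin 4, H y α β * pd2 f α β y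

/-- |k|_{L𝒯} for an index-up 2-tensor (contractions with lowered frame vectors) -/
def normLT (k : Fin 4 → Fin 4 → ℝ) (ω s₁ s₂ : Fin 3 → ℝ) : ℝ :=
  |con2 k (vecLlow ω) (vecLlow ω)| + |con2 k (vecLlow ω) (spat s₁)| +
    |con2 k (vecLlow ω) (spat s₂)|

/-- the region D_t = {x : t/2 ≤ |x| ≤ 2t} -/
def Dreg (t : ℝ) : Set (Fin 3 → ℝ) := {x | t / 2 ≤ nr3 x ∧ nr3 x ≤ 2 * t}



/-! ### Auxiliary lemmas -/

open Matrix in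
lemma frame_complete {ω s1 s2 : Fin 3 → ℝ} (hf : IsFrame ω s1 s2) (i j : Fin 3) :
    ω i * ω j + s1 i * s1 j + s2 i * s2 j = if i = j then 1 else 0 := by
  obtain ⟨h1, h2, h3, h4, h5, h6⟩ := hf
  simp only [Fin.sum_univ_three] at h1 h2 h3 h4 h5 h6
  set M : Matrix (Fin 3) (Fin 3) ℝ := Matrix.of ![ω, s1, s2] with hM
  have hMMt : M * Mᵀ = 1 := by
    ext a b
    fin_cases a <;> fin_cases b <;>
      simp [hM, Matrix.mul_apply, Matrix.transpose_apply, Matrix.vecHead, Matrix.vecTail,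
        Matrix.one_apply, Fin.sum_univ_three] <;> linarith
  have hMtM : Mᵀ * M = 1 := mul_eq_one_comm.mp hMMt
  have h : (Mᵀ * M) i j = (1 : Matrix (Fin 3) (Fin 3) ℝ) i j := by rw [hMtM]
  simpa [hM, Matrix.mul_apply, Matrix.one_apply, Fin.sum_univ_three] using h

lemma comp_abs_le_one {v : Fin 3 → ℝ} (h : (∑ i : Fin 3, v i * v i) = 1) (j : Fin 3) :
    |v j| ≤ 1 := by
  rw [abs_le_one_iff_mul_self_le_one]
  have h2 : v j * v j ≤ ∑ i : Fin 3, v i * v i :=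
    Finset.single_le_sum (f := fun i => v i * v i)
      (fun i _ => mul_self_nonneg (v i)) (Finset.mem_univ j)
  rw [h] at h2; exact h2

lemma minor_le_one (a b c d e f : ℝ) (h1 : a^2 + b^2 + c^2 ≤ 1) (h2 : d^2 + e^2 + f^2 ≤ 1) :
    |a * e - b * d| ≤ 1 := by
  rw [abs_le]
  constructor <;>
    nlinarith [sq_nonneg (a - e), sq_nonneg (b + d), sq_nonneg (a + e), sq_nonneg (b - d)]

lemma lower_sum (a : Fin 4) (y : Fin 4 → ℝ) :
    (∑ γ : Fin 4, mink a γ * y γ) = lowerc y a := by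
  fin_cases a <;> simp [mink, lowerc, Fin.sum_univ_four]

lemma contDiff_pd {f : (Fin 4 → ℝ) → ℝ} (hf : ContDiff ℝ (⊤ : ℕ∞) f) (α : Fin 4) :
    ContDiff ℝ (⊤ : ℕ∞) (pd f α) :=
  (hf.fderiv_right (by norm_num)).clm_apply contDiff_const

lemma contDiff_pd2 {f : (Fin 4 → ℝ) → ℝ} (hf : ContDiff ℝ (⊤ : ℕ∞) f) (α β : Fin 4) :
    ContDiff ℝ (⊤ : ℕ∞) (pd2 f α β) :=
  contDiff_pd (contDiff_pd hf β) α

lemma pd_add {g h : (Fin 4 → ℝ) → ℝ} {y : Fin 4 → ℝ} (hg : DifferentiableAt ℝ g y)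
    (hh : DifferentiableAt ℝ h y) (α : Fin 4) :
    pd (fun z => g z + h z) α y = pd g α y + pd h α y := by
  unfold pd; rw [fderiv_fun_add hg hh]; simp

lemma pd_mul {g h : (Fin 4 → ℝ) → ℝ} {y : Fin 4 → ℝ} (hg : DifferentiableAt ℝ g y)
    (hh : DifferentiableAt ℝ h y) (α : Fin 4) :
    pd (fun z => g z * h z) α y = pd g α y * h y + g y * pd h α y := by
  unfold pd; rw [fderiv_fun_mul hg hh]; simp; ring

lemma pd_const_mul {h : (Fin 4 → ℝ) → ℝ} {y : Fin 4 → ℝ} (hh : DifferentiableAt ℝ h y)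
    (a : ℝ) (α : Fin 4) :
    pd (fun z => a * h z) α y = a * pd h α y := by
  unfold pd; rw [fderiv_const_mul hh]; simp

lemma pd_sum {f : Fin 4 → (Fin 4 → ℝ) → ℝ} {y : Fin 4 → ℝ}
    (h : ∀ i, DifferentiableAt ℝ (f i) y) (α : Fin 4) :
    pd (fun z => ∑ i : Fin 4, f i z) α y = ∑ i : Fin 4, pd (f i) α y := by
  unfold pd; rw [fderiv_fun_sum (fun i _ => h i)]; simp

lemma pd_affine (e : ℝ) (c : Fin 4 → ℝ) (α : Fin 4) (y : Fin 4 → ℝ) :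
    pd (fun z => e + ∑ γ : Fin 4, c γ * z γ) α y = c α := by
  have h : HasFDerivAt (fun z : Fin 4 → ℝ => e + ∑ γ : Fin 4, c γ * z γ)
      (∑ γ : Fin 4, c γ • (ContinuousLinearMap.proj γ : (Fin 4 → ℝ) →L[ℝ] ℝ)) y := by
    apply HasFDerivAt.const_add
    exact HasFDerivAt.fun_sum fun γ _ =>
      ((ContinuousLinearMap.proj γ : (Fin 4 → ℝ) →L[ℝ] ℝ).hasFDerivAt).const_mul (c γ)
  unfold pd
  rw [h.fderiv]
  simp [Pi.single_apply]

lemma contDiff_affine (e : ℝ) (c : Fin 4 → ℝ) :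
    ContDiff ℝ (⊤ : ℕ∞) (fun z : Fin 4 → ℝ => e + ∑ γ : Fin 4, c γ * z γ) := by
  apply ContDiff.add contDiff_const
  apply ContDiff.sum
  intro γ _
  exact contDiff_const.mul ((ContinuousLinearMap.proj γ : (Fin 4 → ℝ) →L[ℝ] ℝ).contDiff)

lemma pd2_comm {f : (Fin 4 → ℝ) → ℝ} (hf : ContDiff ℝ (⊤ : ℕ∞) f) (α β : Fin 4)
    (y : Fin 4 → ℝ) : pd2 f α β y = pd2 f β α y := by
  have hdf : ∀ z, HasFDerivAt f (fderiv ℝ f z) z := fun z =>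
    ((hf.differentiable (by simp)) z).hasFDerivAt
  have hd2 : DifferentiableAt ℝ (fderiv ℝ f) y :=
    ((hf.fderiv_right (m := (⊤:ℕ∞)) (by norm_num)).differentiable (by norm_num)) y
  have hsym := second_derivative_symmetric hdf hd2.hasFDerivAt
  have happ : ∀ w v : Fin 4 → ℝ,
      fderiv ℝ (fun z => fderiv ℝ f z w) y v = fderiv ℝ (fderiv ℝ f) y v w := by
    intro w v
    have hcomp : HasFDerivAt (fun z => (ContinuousLinearMap.apply ℝ ℝ w) (fderiv ℝ f z))
        ((ContinuousLinearMap.apply ℝ ℝ w).comp (fderiv ℝ (fderiv ℝ f) y)) y :=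
      (ContinuousLinearMap.apply ℝ ℝ w).hasFDerivAt.comp y hd2.hasFDerivAt
    have : fderiv ℝ (fun z => fderiv ℝ f z w) y
        = (ContinuousLinearMap.apply ℝ ℝ w).comp (fderiv ℝ (fderiv ℝ f) y) := hcomp.fderiv
    rw [this]; rfl
  show fderiv ℝ (fun z => fderiv ℝ f z (Pi.single β 1)) y (Pi.single α 1)
      = fderiv ℝ (fun z => fderiv ℝ f z (Pi.single α 1)) y (Pi.single β 1)
  rw [happ, happ]
  exact hsym _ _

lemma contract_id (k c A : Fin 4 → Fin 4 → ℝ) (hA : ∀ a b, A a b = A b a) :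
    ∑ α : Fin 4, ∑ β : Fin 4, k α β * (∑ μ : Fin 4, (c β μ * A α μ + c α μ * A β μ))
      = ∑ α : Fin 4, ∑ β : Fin 4, (∑ γ : Fin 4, (k α γ * c γ β + k γ β * c γ α)) * A α β := by
  simp only [Fin.sum_univ_four]
  rw [hA 1 0, hA 2 0, hA 3 0, hA 2 1, hA 3 1, hA 3 2]
  ring

lemma con2_decomp (k c : Fin 4 → Fin 4 → ℝ) (hks : ∀ a b, k a b = k b a)
    (L S1 S2 : Fin 4 → ℝ) (a b1 b2 : ℝ)
    (hu : ∀ γ, (∑ β : Fin 4, c γ β * L β) = a * L γ + b1 * S1 γ + b2 * S2 γ) :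
    con2 (fun α β => ∑ γ : Fin 4, (k α γ * c γ β + k γ β * c γ α)) L L
      = 2 * (a * con2 k L L + b1 * con2 k L S1 + b2 * con2 k L S2) := by
  have H0 := hu 0; have H1 := hu 1; have H2 := hu 2; have H3 := hu 3
  simp only [Fin.sum_univ_four] at H0 H1 H2 H3
  simp only [con2, Fin.sum_univ_four]
  rw [hks 1 0, hks 2 0, hks 3 0, hks 2 1, hks 3 1, hks 3 2]
  linear_combination (2*(k 0 0 * L 0 + k 0 1 * L 1 + k 0 2 * L 2 + k 0 3 * L 3)) * H0
    + (2*(k 0 1 * L 0 + k 1 1 * L 1 + k 1 2 * L 2 + k 1 3 * L 3)) * H1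
    + (2*(k 0 2 * L 0 + k 1 2 * L 1 + k 2 2 * L 2 + k 2 3 * L 3)) * H2
    + (2*(k 0 3 * L 0 + k 1 3 * L 1 + k 2 3 * L 2 + k 3 3 * L 3)) * H3

/-- Master lemma: the whole statement, for a vector field with affine coefficients whose
commutator constants contract against `L` into the frame with small coefficients. -/
lemma master_lemma
    (k : (Fin 4 → ℝ) → Fin 4 → Fin 4 → ℝ)
    (hksym : ∀ y α β, k y α β = k y β α)
    (Zc : (Fin 4 → ℝ) → Fin 4 → ℝ) (c : Fin 4 → Fin 4 → ℝ) (e : Fin 4 → ℝ)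
    (hlin : ∀ y μ, Zc y μ = e μ + ∑ γ : Fin 4, c γ μ * y γ)
    (hdec : ∀ ω s1 s2 : Fin 3 → ℝ, IsFrame ω s1 s2 →
      ∃ a b1 b2 : ℝ, |a| ≤ 1 ∧ |b1| ≤ 1 ∧ |b2| ≤ 1 ∧
        ∀ γ : Fin 4, (∑ β : Fin 4, c γ β * vecLlow ω β)
          = a * vecLlow ω γ + b1 * spat s1 γ + b2 * spat s2 γ)
    (φ : (Fin 4 → ℝ) → ℝ) (hφ : ContDiff ℝ (⊤ : ℕ∞) φ) :
    ∃ c : Fin 4 → Fin 4 → ℝ,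
      (∀ (α μ : Fin 4) (y : Fin 4 → ℝ), pd (fun z => Zc z μ) α y = c α μ) ∧
      (∀ y : Fin 4 → ℝ,
        (∑ α : Fin 4, ∑ β : Fin 4,
            k y α β * (pd2 (Zap Zc φ) α β y - Zap Zc (fun z => pd2 φ α β z) y))
          = ∑ α : Fin 4, ∑ β : Fin 4,
              (∑ γ : Fin 4, (k y α γ * c γ β + k y γ β * c γ α)) * pd2 φ α β y) ∧
      (Zc = sVF → ∀ (y : Fin 4 → ℝ) (α β : Fin 4),
        (∑ γ : Fin 4, (k y α γ * c γ β + k y γ β * c γ α)) = 2 * k y α β) ∧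
      (∀ y : Fin 4 → ℝ, sp y ≠ 0 → ∀ s₁ s₂ : Fin 3 → ℝ, IsFrame (uom y) s₁ s₂ →
        |con2 (fun α β => ∑ γ : Fin 4, (k y α γ * c γ β + k y γ β * c γ α))
            (vecLlow (uom y)) (vecLlow (uom y))|
          ≤ 2 * normLT (k y) (uom y) s₁ s₂) := by
  -- basic facts about the coefficients of Zc
  have hZfun : ∀ μ : Fin 4, (fun z => Zc z μ) = fun z => e μ + ∑ γ : Fin 4, c γ μ * z γ :=
    fun μ => funext fun z => hlin z μ
  have hZs : ∀ μ : Fin 4, ContDiff ℝ (⊤ : ℕ∞) (fun z => Zc z μ) := by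
    intro μ; rw [hZfun μ]; exact contDiff_affine _ _
  have hc : ∀ (α μ : Fin 4) (y : Fin 4 → ℝ), pd (fun z => Zc z μ) α y = c α μ := by
    intro α μ y; rw [hZfun μ]; exact pd_affine _ _ _ _
  -- differentiability conveniences
  have hφd : ∀ (g : (Fin 4 → ℝ) → ℝ), ContDiff ℝ (⊤ : ℕ∞) g → ∀ y, DifferentiableAt ℝ g y :=
    fun g hg y => (hg.differentiable (by simp)) y
  refine ⟨c, hc, ?_, ?_, ?_⟩
  · -- the commutator identity
    intro y
    -- first derivative of Zφ
    have hstep1 : ∀ (β : Fin 4) (z : Fin 4 → ℝ),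
        pd (Zap Zc φ) β z = ∑ μ : Fin 4, (c β μ * pd φ μ z + Zc z μ * pd2 φ β μ z) := by
      intro β z
      have : pd (Zap Zc φ) β z
          = ∑ μ : Fin 4, pd (fun w => Zc w μ * pd φ μ w) β z := by
        exact pd_sum (fun μ => ((hφd _ (hZs μ) z)).mul (hφd _ (contDiff_pd hφ μ) z)) β
      rw [this]
      refine Finset.sum_congr rfl fun μ _ => ?_
      rw [pd_mul (hφd _ (hZs μ) z) (hφd _ (contDiff_pd hφ μ) z), hc]
      rfl
    -- second derivative of Zφ
    have hstep2 : ∀ α β : Fin 4, pd2 (Zap Zc φ) α β y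
        = ∑ μ : Fin 4, (c β μ * pd2 φ α μ y + c α μ * pd2 φ β μ y
            + Zc y μ * pd (pd2 φ β μ) α y) := by
      intro α β
      have hfn : pd (Zap Zc φ) β
          = fun z => ∑ μ : Fin 4, (c β μ * pd φ μ z + Zc z μ * pd2 φ β μ z) :=
        funext fun z => hstep1 β z
      show pd (pd (Zap Zc φ) β) α y = _
      rw [hfn]
      rw [pd_sum (f := fun μ z => c β μ * pd φ μ z + Zc z μ * pd2 φ β μ z) (fun μ => ((hφd _ (contDiff_pd hφ μ) y).const_mul (c β μ)).add
          ((hφd _ (hZs μ) y).mul (hφd _ (contDiff_pd2 hφ β μ) y))) α]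
      refine Finset.sum_congr rfl fun μ _ => ?_
      rw [pd_add (g := fun z => c β μ * pd φ μ z) (h := fun z => Zc z μ * pd2 φ β μ z) (DifferentiableAt.const_mul (hφd _ (contDiff_pd hφ μ) y) (c β μ))
          ((hφd _ (hZs μ) y).mul (hφd _ (contDiff_pd2 hφ β μ) y)) α,
        pd_const_mul (hφd _ (contDiff_pd hφ μ) y) (c β μ) α,
        pd_mul (hφd _ (hZs μ) y) (hφd _ (contDiff_pd2 hφ β μ) y) α, hc]
      simp only [pd2]
      ring
    have hsym3 : ∀ (α β μ : Fin 4), pd (pd2 φ β μ) α y = pd (pd2 φ α β) μ y := by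
      have s23 : ∀ (a b c' : Fin 4), pd (pd2 φ b c') a y = pd (pd2 φ c' b) a y := by
        intro a b c'
        have hbc : pd2 φ b c' = pd2 φ c' b := funext fun z => pd2_comm hφ b c' z
        rw [hbc]
      have s12 : ∀ (a b c' : Fin 4), pd (pd2 φ b c') a y = pd (pd2 φ a c') b y := by
        intro a b c'
        show pd2 (pd φ c') a b y = pd2 (pd φ c') b a y
        exact pd2_comm (contDiff_pd hφ c') a b y
      intro α β μ
      rw [s12 α β μ, s23 β α μ, s12 β μ α, s23 μ β α]
    have hdiff : ∀ α β : Fin 4,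
        pd2 (Zap Zc φ) α β y - Zap Zc (fun z => pd2 φ α β z) y
          = ∑ μ : Fin 4, (c β μ * pd2 φ α μ y + c α μ * pd2 φ β μ y) := by
      intro α β
      have hZap : Zap Zc (fun z => pd2 φ α β z) y
          = ∑ μ : Fin 4, Zc y μ * pd (pd2 φ α β) μ y := rfl
      rw [hstep2 α β, hZap, ← Finset.sum_sub_distrib]
      refine Finset.sum_congr rfl fun μ _ => ?_
      rw [hsym3 α β μ]
      ring
    have hrw : ∑ α : Fin 4, ∑ β : Fin 4,
          k y α β * (pd2 (Zap Zc φ) α β y - Zap Zc (fun z => pd2 φ α β z) y)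
        = ∑ α : Fin 4, ∑ β : Fin 4,
            k y α β * (∑ μ : Fin 4, (c β μ * pd2 φ α μ y + c α μ * pd2 φ β μ y)) := by
      refine Finset.sum_congr rfl fun α _ => Finset.sum_congr rfl fun β _ => ?_
      rw [hdiff]
    rw [hrw]
    exact contract_id (k y) c (fun p q => pd2 φ p q y) (fun p q => pd2_comm hφ p q y)
  · -- the scaling case
    intro hS y α β
    have hcval : ∀ α μ : Fin 4, c α μ = if μ = α then 1 else 0 := by
      intro α μ
      rw [← hc α μ 0, hS]
      have hp : HasFDerivAt (fun z : Fin 4 → ℝ => z μ)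
          (ContinuousLinearMap.proj μ : (Fin 4 → ℝ) →L[ℝ] ℝ) 0 :=
        (ContinuousLinearMap.proj μ : (Fin 4 → ℝ) →L[ℝ] ℝ).hasFDerivAt
      show fderiv ℝ (fun z : Fin 4 → ℝ => sVF z μ) 0 (Pi.single α 1) = _
      have : (fun z : Fin 4 → ℝ => sVF z μ) = fun z : Fin 4 → ℝ => z μ := rfl
      rw [this, hp.fderiv]
      simp [Pi.single_apply]
    simp only [hcval]
    simp [mul_ite, mul_one, mul_zero, Finset.sum_add_distrib, Finset.sum_ite_eq]
    ring
  · -- the frame estimate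
    intro y _ s1 s2 hfr
    obtain ⟨a, b1, b2, ha, hb1, hb2, hu⟩ := hdec (uom y) s1 s2 hfr
    have key := con2_decomp (k y) c (fun p q => hksym y p q)
      (vecLlow (uom y)) (spat s1) (spat s2) a b1 b2 hu
    rw [key]
    set X := con2 (k y) (vecLlow (uom y)) (vecLlow (uom y)) with hX
    set Y := con2 (k y) (vecLlow (uom y)) (spat s1) with hY
    set Z := con2 (k y) (vecLlow (uom y)) (spat s2) with hZ2
    have hN : normLT (k y) (uom y) s1 s2 = |X| + |Y| + |Z| := rfl
    rw [hN, abs_mul, abs_two]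
    have habs : |a * X + b1 * Y + b2 * Z| ≤ |X| + |Y| + |Z| := by
      have h3 := abs_add_three (a * X) (b1 * Y) (b2 * Z)
      rw [abs_mul, abs_mul, abs_mul] at h3
      have tX : |a| * |X| ≤ |X| := mul_le_of_le_one_left (abs_nonneg X) ha
      have tY : |b1| * |Y| ≤ |Y| := mul_le_of_le_one_left (abs_nonneg Y) hb1
      have tZ : |b2| * |Z| ≤ |Z| := mul_le_of_le_one_left (abs_nonneg Z) hb2
      linarith
    linarith [habs]

set_option maxHeartbeats 1600000 in
/-- Lemma 7.5 (first part): commutator of `k^{αβ}∂_α∂_β` with a Minkowski vector field. -/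
theorem commutator_second_order_operator
    (k : (Fin 4 → ℝ) → Fin 4 → Fin 4 → ℝ)
    (hksmooth : ∀ α β, ContDiff ℝ (⊤ : ℕ∞) (fun y => k y α β))
    (hksym : ∀ y α β, k y α β = k y β α)
    (Zc : (Fin 4 → ℝ) → Fin 4 → ℝ) (hZ : ∃ i : Fin 11, Zc = ZV i)
    (φ : (Fin 4 → ℝ) → ℝ) (hφ : ContDiff ℝ (⊤ : ℕ∞) φ) :
    ∃ c : Fin 4 → Fin 4 → ℝ,
      (∀ (α μ : Fin 4) (y : Fin 4 → ℝ), pd (fun z => Zc z μ) α y = c α μ) ∧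
      (∀ y : Fin 4 → ℝ,
        (∑ α : Fin 4, ∑ β : Fin 4,
            k y α β * (pd2 (Zap Zc φ) α β y - Zap Zc (fun z => pd2 φ α β z) y))
          = ∑ α : Fin 4, ∑ β : Fin 4,
              (∑ γ : Fin 4, (k y α γ * c γ β + k y γ β * c γ α)) * pd2 φ α β y) ∧
      (Zc = sVF → ∀ (y : Fin 4 → ℝ) (α β : Fin 4),
        (∑ γ : Fin 4, (k y α γ * c γ β + k y γ β * c γ α)) = 2 * k y α β) ∧
      (∀ y : Fin 4 → ℝ, sp y ≠ 0 → ∀ s₁ s₂ : Fin 3 → ℝ, IsFrame (uom y) s₁ s₂ →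
        |con2 (fun α β => ∑ γ : Fin 4, (k y α γ * c γ β + k y γ β * c γ α))
            (vecLlow (uom y)) (vecLlow (uom y))|
          ≤ 2 * normLT (k y) (uom y) s₁ s₂) := by
  obtain ⟨i, rfl⟩ := hZ
  fin_cases i
  · -- translation ∂_0
    refine master_lemma k hksym _ (fun _ _ => 0) (Pi.single 0 1) ?_ ?_ φ hφ
    · intro y μ
      show dVF _ y μ = _
      simp [dVF]
    · intro ω s1 s2 _
      exact ⟨0, 0, 0, by norm_num, by norm_num, by norm_num, fun γ => by simp⟩
  · -- translation ∂_1
    refine master_lemma k hksym _ (fun _ _ => 0) (Pi.single 1 1) ?_ ?_ φ hφ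
    · intro y μ
      show dVF _ y μ = _
      simp [dVF]
    · intro ω s1 s2 _
      exact ⟨0, 0, 0, by norm_num, by norm_num, by norm_num, fun γ => by simp⟩
  · -- translation ∂_2
    refine master_lemma k hksym _ (fun _ _ => 0) (Pi.single 2 1) ?_ ?_ φ hφ
    · intro y μ
      show dVF _ y μ = _
      simp [dVF]
    · intro ω s1 s2 _
      exact ⟨0, 0, 0, by norm_num, by norm_num, by norm_num, fun γ => by simp⟩
  · -- translation ∂_3
    refine master_lemma k hksym _ (fun _ _ => 0) (Pi.single 3 1) ?_ ?_ φ hφ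
    · intro y μ
      show dVF _ y μ = _
      simp [dVF]
    · intro ω s1 s2 _
      exact ⟨0, 0, 0, by norm_num, by norm_num, by norm_num, fun γ => by simp⟩
  · -- boost Ω_(0,1)
    refine master_lemma k hksym _
      (fun γ ν => (if ν = 1 then mink 0 γ else 0) - (if ν = 0 then mink 1 γ else 0))
      (fun _ => 0) ?_ ?_ φ hφ
    · intro y ν
      show omVF _ _ y ν = _
      fin_cases ν <;> simp [omVF, lowerc, mink, Fin.sum_univ_four] <;> ring
    · intro ω s1 s2 hfr
      have C0 := frame_complete hfr 0 0
      have C1 := frame_complete hfr 0 1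
      have C2 := frame_complete hfr 0 2
      simp only [Fin.reduceEq, if_true, if_false, reduceIte] at C0 C1 C2
      refine ⟨ω 0, s1 0, s2 0, comp_abs_le_one hfr.1 0,
        comp_abs_le_one hfr.2.1 0, comp_abs_le_one hfr.2.2.1 0, ?_⟩
      intro γ
      fin_cases γ <;> simp [vecLlow, spat, mink, Fin.sum_univ_four] <;>
        first
        | ring1
        | linarith [C0, C1, C2]
        | linear_combination C0
        | linear_combination C1
        | linear_combination C2
        | linear_combination -C0
        | linear_combination -C1
        | linear_combination -C2
  · -- boost Ω_(0,2)
    refine master_lemma k hksym _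
      (fun γ ν => (if ν = 2 then mink 0 γ else 0) - (if ν = 0 then mink 2 γ else 0))
      (fun _ => 0) ?_ ?_ φ hφ
    · intro y ν
      show omVF _ _ y ν = _
      fin_cases ν <;> simp [omVF, lowerc, mink, Fin.sum_univ_four] <;> ring
    · intro ω s1 s2 hfr
      have C0 := frame_complete hfr 1 0
      have C1 := frame_complete hfr 1 1
      have C2 := frame_complete hfr 1 2
      simp only [Fin.reduceEq, if_true, if_false, reduceIte] at C0 C1 C2
      refine ⟨ω 1, s1 1, s2 1, comp_abs_le_one hfr.1 1,
        comp_abs_le_one hfr.2.1 1, comp_abs_le_one hfr.2.2.1 1, ?_⟩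
      intro γ
      fin_cases γ <;> simp [vecLlow, spat, mink, Fin.sum_univ_four] <;>
        first
        | ring1
        | linarith [C0, C1, C2]
        | linear_combination C0
        | linear_combination C1
        | linear_combination C2
        | linear_combination -C0
        | linear_combination -C1
        | linear_combination -C2
  · -- boost Ω_(0,3)
    refine master_lemma k hksym _
      (fun γ ν => (if ν = 3 then mink 0 γ else 0) - (if ν = 0 then mink 3 γ else 0))
      (fun _ => 0) ?_ ?_ φ hφ
    · intro y ν
      show omVF _ _ y ν = _
      fin_cases ν <;> simp [omVF, lowerc, mink, Fin.sum_univ_four] <;> ring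
    · intro ω s1 s2 hfr
      have C0 := frame_complete hfr 2 0
      have C1 := frame_complete hfr 2 1
      have C2 := frame_complete hfr 2 2
      simp only [Fin.reduceEq, if_true, if_false, reduceIte] at C0 C1 C2
      refine ⟨ω 2, s1 2, s2 2, comp_abs_le_one hfr.1 2,
        comp_abs_le_one hfr.2.1 2, comp_abs_le_one hfr.2.2.1 2, ?_⟩
      intro γ
      fin_cases γ <;> simp [vecLlow, spat, mink, Fin.sum_univ_four] <;>
        first
        | ring1
        | linarith [C0, C1, C2]
        | linear_combination C0
        | linear_combination C1
        | linear_combination C2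
        | linear_combination -C0
        | linear_combination -C1
        | linear_combination -C2
  · -- rotation Ω_(1,2)
    refine master_lemma k hksym _
      (fun γ ν => (if ν = 2 then mink 1 γ else 0) - (if ν = 1 then mink 2 γ else 0))
      (fun _ => 0) ?_ ?_ φ hφ
    · intro y ν
      show omVF _ _ y ν = _
      fin_cases ν <;> simp [omVF, lowerc, mink, Fin.sum_univ_four] <;> ring
    · intro ω s1 s2 hfr
      have h1 := hfr.1
      have h2 := hfr.2.1
      have h3 := hfr.2.2.1
      simp only [Fin.sum_univ_three] at h1 h2 h3
      have CA0 := frame_complete hfr 0 0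
      have CA1 := frame_complete hfr 0 1
      have CA2 := frame_complete hfr 0 2
      have CB0 := frame_complete hfr 1 0
      have CB1 := frame_complete hfr 1 1
      have CB2 := frame_complete hfr 1 2
      simp only [Fin.reduceEq, if_true, if_false, reduceIte] at CA0 CA1 CA2 CB0 CB1 CB2
      refine ⟨0, ω 1 * s1 0 - ω 0 * s1 1, ω 1 * s2 0 - ω 0 * s2 1,
        by norm_num,
        minor_le_one (ω 1) (ω 0) (ω 2) (s1 1) (s1 0) (s1 2)
          (by nlinarith) (by nlinarith),
        minor_le_one (ω 1) (ω 0) (ω 2) (s2 1) (s2 0) (s2 2)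
          (by nlinarith) (by nlinarith), ?_⟩
      intro γ
      fin_cases γ
      · simp [vecLlow, spat, mink, Fin.sum_univ_four]
      · simp [vecLlow, spat, mink, Fin.sum_univ_four]
        linear_combination (ω 0) * CB0 - (ω 1) * CA0
      · simp [vecLlow, spat, mink, Fin.sum_univ_four]
        linear_combination (ω 0) * CB1 - (ω 1) * CA1
      · simp [vecLlow, spat, mink, Fin.sum_univ_four]
        linear_combination (ω 0) * CB2 - (ω 1) * CA2
  · -- rotation Ω_(1,3)
    refine master_lemma k hksym _
      (fun γ ν => (if ν = 3 then mink 1 γ else 0) - (if ν = 1 then mink 3 γ else 0))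
      (fun _ => 0) ?_ ?_ φ hφ
    · intro y ν
      show omVF _ _ y ν = _
      fin_cases ν <;> simp [omVF, lowerc, mink, Fin.sum_univ_four] <;> ring
    · intro ω s1 s2 hfr
      have h1 := hfr.1
      have h2 := hfr.2.1
      have h3 := hfr.2.2.1
      simp only [Fin.sum_univ_three] at h1 h2 h3
      have CA0 := frame_complete hfr 0 0
      have CA1 := frame_complete hfr 0 1
      have CA2 := frame_complete hfr 0 2
      have CB0 := frame_complete hfr 2 0
      have CB1 := frame_complete hfr 2 1
      have CB2 := frame_complete hfr 2 2
      simp only [Fin.reduceEq, if_true, if_false, reduceIte] at CA0 CA1 CA2 CB0 CB1 CB2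
      refine ⟨0, ω 2 * s1 0 - ω 0 * s1 2, ω 2 * s2 0 - ω 0 * s2 2,
        by norm_num,
        minor_le_one (ω 2) (ω 0) (ω 1) (s1 2) (s1 0) (s1 1)
          (by nlinarith) (by nlinarith),
        minor_le_one (ω 2) (ω 0) (ω 1) (s2 2) (s2 0) (s2 1)
          (by nlinarith) (by nlinarith), ?_⟩
      intro γ
      fin_cases γ
      · simp [vecLlow, spat, mink, Fin.sum_univ_four]
      · simp [vecLlow, spat, mink, Fin.sum_univ_four]
        linear_combination (ω 0) * CB0 - (ω 2) * CA0
      · simp [vecLlow, spat, mink, Fin.sum_univ_four]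
        linear_combination (ω 0) * CB1 - (ω 2) * CA1
      · simp [vecLlow, spat, mink, Fin.sum_univ_four]
        linear_combination (ω 0) * CB2 - (ω 2) * CA2
  · -- rotation Ω_(2,3)
    refine master_lemma k hksym _
      (fun γ ν => (if ν = 3 then mink 2 γ else 0) - (if ν = 2 then mink 3 γ else 0))
      (fun _ => 0) ?_ ?_ φ hφ
    · intro y ν
      show omVF _ _ y ν = _
      fin_cases ν <;> simp [omVF, lowerc, mink, Fin.sum_univ_four] <;> ring
    · intro ω s1 s2 hfr
      have h1 := hfr.1
      have h2 := hfr.2.1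
      have h3 := hfr.2.2.1
      simp only [Fin.sum_univ_three] at h1 h2 h3
      have CA0 := frame_complete hfr 1 0
      have CA1 := frame_complete hfr 1 1
      have CA2 := frame_complete hfr 1 2
      have CB0 := frame_complete hfr 2 0
      have CB1 := frame_complete hfr 2 1
      have CB2 := frame_complete hfr 2 2
      simp only [Fin.reduceEq, if_true, if_false, reduceIte] at CA0 CA1 CA2 CB0 CB1 CB2
      refine ⟨0, ω 2 * s1 1 - ω 1 * s1 2, ω 2 * s2 1 - ω 1 * s2 2,
        by norm_num,
        minor_le_one (ω 2) (ω 1) (ω 0) (s1 2) (s1 1) (s1 0)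
          (by nlinarith) (by nlinarith),
        minor_le_one (ω 2) (ω 1) (ω 0) (s2 2) (s2 1) (s2 0)
          (by nlinarith) (by nlinarith), ?_⟩
      intro γ
      fin_cases γ
      · simp [vecLlow, spat, mink, Fin.sum_univ_four]
      · simp [vecLlow, spat, mink, Fin.sum_univ_four]
        linear_combination (ω 1) * CB0 - (ω 2) * CA0
      · simp [vecLlow, spat, mink, Fin.sum_univ_four]
        linear_combination (ω 1) * CB1 - (ω 2) * CA1
      · simp [vecLlow, spat, mink, Fin.sum_univ_four]
        linear_combination (ω 1) * CB2 - (ω 2) * CA2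
  · -- scaling S
    refine master_lemma k hksym _ (fun γ ν => if γ = ν then 1 else 0) (fun _ => 0) ?_ ?_ φ hφ
    · intro y μ
      show sVF y μ = _
      simp [sVF, ite_mul, one_mul, zero_mul, Finset.sum_ite_eq]
    · intro ω s1 s2 _
      refine ⟨1, 0, 0, by norm_num, by norm_num, by norm_num, ?_⟩
      intro γ
      simp [ite_mul, one_mul, zero_mul, Finset.sum_ite_eq]
end LindbladRodnianski
end
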